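/- (Complex instance of the main stability theorem with the trivial involution, case (a).) Let D ⊆ ℂ, let S ⊆ ℂ be a finite set, and let f : ℂ → ℂ satisfy f(q) ∈ S for all q ∈ D and the B-projection property with respect to B(p,q) = Re(p·q): Re(f(q)·q) > Re(s·q) for every q ∈ D and every s ∈ S with s ≠ f(q). Let N ≥ 1 and let (w_ij) be an N×N complex matrix with w_ij = w_ji for all i, j, and with w_ii = 0 for all i. Then for every update schedule σ : ℕ → {1,…,N} and every initial state x(0) ∈ S^N, the asynchronous Hopfield trajectory defined by x_i(t+1) = f(v_i(t)) if i = σ(t) and v_i(t) ∈ D, and x_i(t+1) = x_i(t) otherwise, where v_i(t) = Σⱼ w_ij · x_j(t), is eventually constant: there exists T such that x(t) = x(T) for all t ≥ T. -/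

import Mathlib

private lemma hopfield_energy_update_aux (N : ℕ) (w : Fin N → Fin N → ℂ)
    (hsym : ∀ i j, w i j = w j i)
    (hdiag : ∀ i, w i i = 0) (y : Fin N → ℂ) (i : Fin N) (d : ℂ) :
    (∑ k, ∑ l, w k l * (y k + (if k = i then d else 0)) * (y l + (if l = i then d else 0)))
      = (∑ k, ∑ l, w k l * y k * y l) + d * (∑ j, w i j * y j) + d * (∑ j, w i j * y j) := by
  have expand : ∀ k l : Fin N, w k l * (y k + (if k = i then d else 0)) * (y l + (if l = i then d else 0))
      = w k l * y k * y l
        + (if k = i then w i l * d * y l else 0)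
        + (if l = i then w k i * y k * d else 0)
        + (if k = i then (if l = i then w i i * d * d else 0) else 0) := by
    intro k l
    by_cases hk : k = i <;> by_cases hl : l = i <;> simp [hk, hl] <;> ring
  simp only [expand, Finset.sum_add_distrib]
  have h1 : (∑ k, ∑ l, if k = i then w i l * d * y l else 0) = d * (∑ j, w i j * y j) := by
    have e1 : ∀ k : Fin N, (∑ l, if k = i then w i l * d * y l else 0)
        = if k = i then (∑ l, w i l * d * y l) else 0 := by
      intro k; by_cases hk : k = i <;> simp [hk]
    simp only [e1, Finset.sum_ite_eq' Finset.univ i, Finset.mem_univ, if_true, Finset.mul_sum]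
    exact Finset.sum_congr rfl fun l _ => by ring
  have h2 : (∑ k, ∑ l, if l = i then w k i * y k * d else 0) = d * (∑ j, w i j * y j) := by
    have e2 : ∀ k : Fin N, (∑ l, if l = i then w k i * y k * d else 0) = w k i * y k * d := by
      intro k; simp [Finset.sum_ite_eq' Finset.univ i]
    simp only [e2, Finset.mul_sum]
    exact Finset.sum_congr rfl fun k _ => by rw [hsym k i]; ring
  have h3 : (∑ k, ∑ l, if k = i then (if l = i then w i i * d * d else 0) else 0) = 0 := by
    simp [Finset.sum_ite_eq' Finset.univ i, hdiag]
  rw [h1, h2, h3, add_zero]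

theorem complex_trivial_involution_hopfield_convergence (D S : Set ℂ)
    (hSfin : S.Finite)
    (f : ℂ → ℂ)
    (hfS : ∀ q ∈ D, f q ∈ S)
    (hproj : ∀ q ∈ D, ∀ s ∈ S, s ≠ f q → (s * q).re < (f q * q).re)
    (N : ℕ) (hN : 1 ≤ N)
    (w : Fin N → Fin N → ℂ)
    (hsym : ∀ i j, w i j = w j i)
    (hdiag : ∀ i, w i i = 0)
    (σ : ℕ → Fin N) (x : ℕ → Fin N → ℂ)
    (hx0 : ∀ i, x 0 i ∈ S)
    (hdyn : ∀ t i,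
      ((i = σ t ∧ (∑ j, w i j * x t j) ∈ D) →
        x (t + 1) i = f (∑ j, w i j * x t j)) ∧
      (¬(i = σ t ∧ (∑ j, w i j * x t j) ∈ D) →
        x (t + 1) i = x t i)) :
    ∃ T, ∀ t, T ≤ t → x t = x T := by
  classical
  -- states remain in S
  have hxS : ∀ t i, x t i ∈ S := by
    intro t
    induction t with
    | zero => exact hx0
    | succ t ih =>
      intro i
      by_cases h : i = σ t ∧ (∑ j, w i j * x t j) ∈ D
      · rw [(hdyn t i).1 h]; exact hfS _ h.2
      · rw [(hdyn t i).2 h]; exact ih i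
  set g : (Fin N → ℂ) → ℝ := fun y => (∑ k, ∑ l, w k l * y k * y l).re with hg
  set E : ℕ → ℝ := fun t => g (x t) with hE
  have hfix : ∀ t i, i ≠ σ t → x (t+1) i = x t i := by
    intro t i hi
    exact (hdyn t i).2 (fun h => hi h.1)
  -- strict energy increase on change
  have hstep : ∀ t, x (t+1) ≠ x t → E t < E (t+1) := by
    intro t hne
    set i := σ t with hi
    have hich : x (t+1) i ≠ x t i := by
      intro h
      apply hne; funext j
      by_cases hj : j = i
      · rw [hj]; exact h
      · exact hfix t j (by rw [hi] at hj; exact hj)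
    set v := ∑ j, w i j * x t j with hv
    have hupd : v ∈ D ∧ x (t+1) i = f v := by
      by_cases h : (i : Fin N) = σ t ∧ v ∈ D
      · exact ⟨h.2, (hdyn t i).1 h⟩
      · exact absurd ((hdyn t i).2 h) hich
    obtain ⟨hvD, hxb⟩ := hupd
    set a := x t i with ha
    set b := f v with hb
    have hane : a ≠ b := fun h => hich (by rw [hxb, ← h])
    have hlt : (a * v).re < (b * v).re := hproj v hvD a (hxS t i) hane
    set d := b - a with hd
    have hy' : ∀ k, x (t+1) k = x t k + (if k = i then d else 0) := by
      intro k
      by_cases hk : k = i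
      · rw [hk, hxb]; simp [hd, hb, ha]
      · simp [hk, hfix t k hk]
    have hid : (∑ k, ∑ l, w k l * x (t+1) k * x (t+1) l)
        = (∑ k, ∑ l, w k l * x t k * x t l) + d * v + d * v := by
      have := hopfield_energy_update_aux N w hsym hdiag (x t) i d
      rw [← hv] at this
      rw [← this]
      exact Finset.sum_congr rfl fun k _ => Finset.sum_congr rfl fun l _ => by
        rw [hy' k, hy' l]
    have hdre : 0 < (d * v).re := by
      have : (d * v).re = (b * v).re - (a * v).re := by
        rw [hd]; rw [sub_mul]; simp [Complex.sub_re]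
      rw [this]; linarith
    have : E (t+1) = E t + (d * v).re + (d * v).re := by
      simp only [hE, hg, hid, Complex.add_re]
    rw [this]; linarith
  -- E is monotone
  have hmono : Monotone E := by
    apply monotone_nat_of_le_succ
    intro t
    by_cases h : x (t+1) = x t
    · simp only [hE, h]; exact le_refl _
    · exact le_of_lt (hstep t h)
  -- range of E is finite
  have hrange : (Set.range E).Finite := by
    have hP : (Set.pi Set.univ (fun _ : Fin N => S)).Finite :=
      Set.Finite.pi (fun _ => hSfin)
    apply Set.Finite.subset (hP.image g)
    rintro _ ⟨t, rfl⟩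
    exact ⟨x t, fun i _ => hxS t i, rfl⟩
  have hne : (Set.range E).Nonempty := ⟨E 0, 0, rfl⟩
  obtain ⟨M, hMmem, hMmax⟩ : ∃ M ∈ Set.range E, ∀ a' ∈ Set.range E, M ≤ a' → M = a' := by
    obtain ⟨M, hM⟩ := hrange.exists_maximal hne
    exact ⟨M, hM.1, fun a ha hle => le_antisymm hle (hM.2 ha hle)⟩
  obtain ⟨T, hT⟩ := hMmem
  have hmax : ∀ t, E t ≤ E T := by
    intro t
    rcases le_or_gt (E t) M with h | h
    · rw [hT]; exact h
    · exact absurd (hMmax (E t) ⟨t, rfl⟩ (le_of_lt h)) (ne_of_lt h)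
  refine ⟨T, ?_⟩
  intro t ht
  induction t with
  | zero =>
    have : T = 0 := Nat.le_zero.mp ht
    rw [this]
  | succ t ih =>
    by_cases h : T ≤ t
    · have hxx : x (t+1) = x t := by
        by_contra hne'
        have h1 := hstep t hne'
        have h2 := hmono h
        have h3 := hmax (t+1)
        linarith
      rw [hxx]; exact ih h
    · have : T = t + 1 := le_antisymm ht (not_le.mp h)
      rw [this]
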